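/- For every m ≥ 1 and k ≥ 0, the iterated divergence of a vector field X with respect to the rescaled measure μ/δ^{m-1} satisfies div^k_{μ/δ^{m-1}}(X) = Σ_{j=0}^k c_{j,k,m} · div^{k-j}_μ(X)/δ^j for suitable real coefficients c_{j,k,m}, on the set where δ > 0 and X δ = 1. -/

import Mathlib

open Finset

/-- Universal coefficients: `Acoef p k j` is the coefficient of `L^[k-j] ρ / δ^(p+j)` in
`L^[k] (ρ/δ^p)`. -/
noncomputable def Acoef (p : ℕ) : ℕ → ℕ → ℝ
  | 0, 0 => 1
  | 0, _+1 => 0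
  | k+1, 0 => Acoef p k 0
  | k+1, j+1 => Acoef p k (j+1) - ((p : ℝ) + j) * Acoef p k j

lemma Acoef_eq_zero (p : ℕ) : ∀ k j : ℕ, k < j → Acoef p k j = 0 := by
  intro k
  induction k with
  | zero =>
    rintro (_|j) h
    · omega
    · rfl
  | succ k ih =>
    rintro (_|j) h
    · omega
    · have h1 : Acoef p k (j+1) = 0 := ih _ (by omega)
      have h2 : Acoef p k j = 0 := ih _ (by omega)
      show Acoef p k (j+1) - ((p : ℝ) + j) * Acoef p k j = 0
      rw [h1, h2]; ring

section Aux

variable {n : ℕ} {X : (Fin n → ℝ) → (Fin n → ℝ)}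
variable {L : ((Fin n → ℝ) → ℝ) → ((Fin n → ℝ) → ℝ)}

/-- divergence of `X` -/
noncomputable def sdiv (X : (Fin n → ℝ) → (Fin n → ℝ)) (x : Fin n → ℝ) : ℝ :=
  ∑ i, fderiv ℝ (fun y => X y i) x (Pi.single i 1)

lemma diffXi (hX : ContDiff ℝ (⊤:ℕ∞) X) (i : Fin n) (x : Fin n → ℝ) :
    DifferentiableAt ℝ (fun y => X y i) x :=
  differentiableAt_pi.1 (hX.differentiable (by simp) x) i

lemma L_eq (hX : ContDiff ℝ (⊤:ℕ∞) X)
    (hL : ∀ g x, L g x = ∑ i, fderiv ℝ (fun y => g y * X y i) x (Pi.single i 1))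
    {g : (Fin n → ℝ) → ℝ} {x : Fin n → ℝ} (hg : DifferentiableAt ℝ g x) :
    L g x = fderiv ℝ g x (X x) + g x * sdiv X x := by
  rw [hL, sdiv]
  have h : ∀ i : Fin n, fderiv ℝ (fun y => g y * X y i) x (Pi.single i 1)
      = g x * fderiv ℝ (fun y => X y i) x (Pi.single i 1)
        + X x i * fderiv ℝ g x (Pi.single i 1) := by
    intro i
    rw [fderiv_fun_mul hg (diffXi hX i x)]
    simp [smul_eq_mul]
  simp only [h]
  rw [Finset.sum_add_distrib, ← Finset.mul_sum]
  have hXx : (∑ i, X x i • (Pi.single i 1 : Fin n → ℝ)) = X x := by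
    ext j
    simp [Pi.single_apply]
  have h2 : fderiv ℝ g x (X x) = ∑ i, X x i * fderiv ℝ g x (Pi.single i 1) := by
    conv_lhs => rw [← hXx]
    rw [map_sum]
    refine Finset.sum_congr rfl fun i _ => ?_
    rw [map_smul, smul_eq_mul]
  rw [h2]; ring

lemma L_local
    (hL : ∀ g x, L g x = ∑ i, fderiv ℝ (fun y => g y * X y i) x (Pi.single i 1))
    {U : Set (Fin n → ℝ)} (hU : IsOpen U) {f g : (Fin n → ℝ) → ℝ}
    (hfg : Set.EqOn f g U) {x : Fin n → ℝ} (hx : x ∈ U) : L f x = L g x := by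
  rw [hL, hL]
  refine Finset.sum_congr rfl fun i _ => ?_
  have h : (fun y => f y * X y i) =ᶠ[nhds x] (fun y => g y * X y i) := by
    filter_upwards [hU.mem_nhds hx] with y hy
    rw [hfg hy]
  rw [h.fderiv_eq]

lemma L_iter_local
    (hL : ∀ g x, L g x = ∑ i, fderiv ℝ (fun y => g y * X y i) x (Pi.single i 1))
    {U : Set (Fin n → ℝ)} (hU : IsOpen U) {f g : (Fin n → ℝ) → ℝ}
    (hfg : Set.EqOn f g U) (k : ℕ) : Set.EqOn (L^[k] f) (L^[k] g) U := by
  induction k with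
  | zero => simpa using hfg
  | succ k ih =>
    intro x hx
    rw [Function.iterate_succ_apply', Function.iterate_succ_apply']
    exact L_local hL hU ih hx

lemma smooth_L (hX : ContDiff ℝ (⊤:ℕ∞) X)
    (hL : ∀ g x, L g x = ∑ i, fderiv ℝ (fun y => g y * X y i) x (Pi.single i 1))
    {g : (Fin n → ℝ) → ℝ} (hg : ContDiff ℝ (⊤:ℕ∞) g) : ContDiff ℝ (⊤:ℕ∞) (L g) := by
  have hfun : L g = fun x => ∑ i, fderiv ℝ (fun y => g y * X y i) x (Pi.single i 1) :=
    funext fun x => hL g x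
  rw [hfun]
  apply ContDiff.sum
  intro i _
  have hgi : ContDiff ℝ (⊤:ℕ∞) (fun y => g y * X y i) := hg.mul (contDiff_pi.1 hX i)
  exact (ContinuousLinearMap.apply ℝ ℝ (Pi.single i 1)).contDiff.comp (hgi.fderiv_right (m := ((⊤:ℕ∞) : WithTop ℕ∞)) (by exact_mod_cast (by simp : (⊤:ℕ∞) + 1 ≤ ⊤)))

lemma smooth_L_iter (hX : ContDiff ℝ (⊤:ℕ∞) X)
    (hL : ∀ g x, L g x = ∑ i, fderiv ℝ (fun y => g y * X y i) x (Pi.single i 1))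
    {g : (Fin n → ℝ) → ℝ} (hg : ContDiff ℝ (⊤:ℕ∞) g) (k : ℕ) :
    ContDiff ℝ (⊤:ℕ∞) (L^[k] g) := by
  induction k with
  | zero => simpa using hg
  | succ k ih =>
    rw [Function.iterate_succ_apply']
    exact smooth_L hX hL ih

lemma L_add (hX : ContDiff ℝ (⊤:ℕ∞) X)
    (hL : ∀ g x, L g x = ∑ i, fderiv ℝ (fun y => g y * X y i) x (Pi.single i 1))
    {g h : (Fin n → ℝ) → ℝ} {x : Fin n → ℝ}
    (hg : DifferentiableAt ℝ g x) (hh : DifferentiableAt ℝ h x) :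
    L (fun y => g y + h y) x = L g x + L h x := by
  rw [L_eq hX hL (hg.fun_add hh), L_eq hX hL hg, L_eq hX hL hh, fderiv_fun_add hg hh]
  simp
  ring

lemma L_smul (hX : ContDiff ℝ (⊤:ℕ∞) X)
    (hL : ∀ g x, L g x = ∑ i, fderiv ℝ (fun y => g y * X y i) x (Pi.single i 1))
    {g : (Fin n → ℝ) → ℝ} {x : Fin n → ℝ} (a : ℝ) (hg : DifferentiableAt ℝ g x) :
    L (fun y => a * g y) x = a * L g x := by
  rw [L_eq hX hL (hg.const_mul a), L_eq hX hL hg, fderiv_const_mul hg a]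
  simp
  ring

lemma L_zero (hX : ContDiff ℝ (⊤:ℕ∞) X)
    (hL : ∀ g x, L g x = ∑ i, fderiv ℝ (fun y => g y * X y i) x (Pi.single i 1))
    (x : Fin n → ℝ) : L (fun _ => (0:ℝ)) x = 0 := by
  rw [L_eq hX hL (differentiableAt_const 0)]
  simp

lemma L_sum (hX : ContDiff ℝ (⊤:ℕ∞) X)
    (hL : ∀ g x, L g x = ∑ i, fderiv ℝ (fun y => g y * X y i) x (Pi.single i 1))
    {ι : Type*} (s : Finset ι) (F : ι → (Fin n → ℝ) → ℝ) {x : Fin n → ℝ}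
    (hF : ∀ j ∈ s, DifferentiableAt ℝ (F j) x) :
    L (fun y => ∑ j ∈ s, F j y) x = ∑ j ∈ s, L (F j) x := by
  classical
  induction s using Finset.induction with
  | empty => simpa using L_zero hX hL x
  | @insert a s ha ih =>
    simp only [Finset.sum_insert ha]
    rw [L_add hX hL (hF a (Finset.mem_insert_self a s))
      (DifferentiableAt.fun_sum fun j hj => hF j (Finset.mem_insert_of_mem hj)),
      ih fun j hj => hF j (Finset.mem_insert_of_mem hj)]

lemma L_div (hX : ContDiff ℝ (⊤:ℕ∞) X) {δ : (Fin n → ℝ) → ℝ} (hδ : ContDiff ℝ (⊤:ℕ∞) δ)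
    (hL : ∀ g x, L g x = ∑ i, fderiv ℝ (fun y => g y * X y i) x (Pi.single i 1))
    {x : Fin n → ℝ} (hδx : δ x ≠ 0) (hXδ : fderiv ℝ δ x (X x) = 1)
    {φ : (Fin n → ℝ) → ℝ} (hφ : ContDiff ℝ (⊤:ℕ∞) φ) (p : ℕ) :
    L (fun y => φ y / δ y ^ p) x = L φ x / δ x ^ p - p * φ x / δ x ^ (p+1) := by
  have hφd : HasFDerivAt φ (fderiv ℝ φ x) x := (hφ.differentiable (by simp) x).hasFDerivAt
  have hδd : HasFDerivAt δ (fderiv ℝ δ x) x := (hδ.differentiable (by simp) x).hasFDerivAt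
  have hpow : HasFDerivAt (fun y => δ y ^ p)
      (((p : ℝ) * δ x ^ (p-1)) • fderiv ℝ δ x) x := by
    have := (hasDerivAt_pow p (δ x)).comp_hasFDerivAt x hδd
    simpa [Function.comp_def] using this
  have hne : δ x ^ p ≠ 0 := pow_ne_zero _ hδx
  have hinv : HasFDerivAt (fun y => (δ y ^ p)⁻¹)
      ((-((δ x ^ p) ^ 2)⁻¹) • (((p : ℝ) * δ x ^ (p-1)) • fderiv ℝ δ x)) x := by
    have := (hasDerivAt_inv hne).comp_hasFDerivAt x hpow
    exact this
  have hg : HasFDerivAt (fun y => φ y * (δ y ^ p)⁻¹)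
      (φ x • ((-((δ x ^ p) ^ 2)⁻¹) • (((p : ℝ) * δ x ^ (p-1)) • fderiv ℝ δ x))
        + (δ x ^ p)⁻¹ • fderiv ℝ φ x) x := hφd.mul hinv
  have heq : (fun y => φ y / δ y ^ p) = fun y => φ y * (δ y ^ p)⁻¹ := by
    funext y; rw [div_eq_mul_inv]
  rw [heq, L_eq hX hL hg.differentiableAt, L_eq hX hL hφd.differentiableAt, hg.fderiv]
  simp only [ContinuousLinearMap.add_apply, ContinuousLinearMap.smul_apply, hXδ,
    smul_eq_mul, mul_one]
  rcases p with _ | q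
  · simp
  · have hq : δ x ^ q * δ x = δ x ^ (q+1) := by rw [pow_succ]
    simp only [Nat.add_sub_cancel]
    field_simp
    ring

end Aux



/-- For every `m ≥ 1` and `k ≥ 0` there are universal real coefficients `c_{j,k,m}` such that
the iterated divergence with respect to the rescaled density `μ/δ^{m-1}` satisfies
`div^k_{μ/δ^{m-1}}(X) = ∑_{j=0}^k c_{j,k,m} · div^{k-j}_μ(X) / δ^j`
on the set where `δ > 0` and `Xδ = 1`.  Densities on `ℝⁿ` are written as `g·dx` and the Lie
derivative along `X` is `L(g·dx) = (∑ᵢ ∂ᵢ(g Xᵢ))·dx`; the iterated divergences `c k` (resp.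
`d k`) are defined by `L^k(μ/δ^{m-1}) = (c k)·μ/δ^{m-1}` (resp. `L^k μ = (d k)·μ`). -/
theorem stmt1 :
    ∀ m k : ℕ, 1 ≤ m →
    ∃ coef : ℕ → ℝ,
      ∀ (n : ℕ) (ρ : (Fin n → ℝ) → ℝ) (X : (Fin n → ℝ) → (Fin n → ℝ))
        (δ : (Fin n → ℝ) → ℝ) (U : Set (Fin n → ℝ)),
        IsOpen U →
        ContDiff ℝ (⊤ : ℕ∞) ρ → (∀ x, 0 < ρ x) →
        ContDiff ℝ (⊤ : ℕ∞) X → ContDiff ℝ (⊤ : ℕ∞) δ →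
        (∀ x ∈ U, 0 < δ x) →
        (∀ x ∈ U, fderiv ℝ δ x (X x) = 1) →
        ∀ (L : ((Fin n → ℝ) → ℝ) → ((Fin n → ℝ) → ℝ)),
        (∀ g x, L g x = ∑ i, fderiv ℝ (fun y => g y * X y i) x (Pi.single i 1)) →
        ∀ (c d : ℕ → (Fin n → ℝ) → ℝ),
        (∀ j x, x ∈ U → (L^[j] (fun y => ρ y / δ y ^ (m - 1))) x = c j x * (ρ x / δ x ^ (m - 1))) →
        (∀ j x, x ∈ U → (L^[j] ρ) x = d j x * ρ x) →
        ∀ x ∈ U, c k x = ∑ j ∈ Finset.range (k + 1), coef j * (d (k - j) x / δ x ^ j) := by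
  
  intro m k _hm
  refine ⟨Acoef (m-1) k, ?_⟩
  intro n ρ X δ U hU hρ hρpos hX hδ hδpos hXδ L hL c d hc hd x hx
  set p := m - 1 with hp
  have hsmiter : ∀ a : ℕ, ContDiff ℝ (⊤:ℕ∞) (L^[a] ρ) := smooth_L_iter hX hL hρ
  have hδdiff : ∀ z, DifferentiableAt ℝ δ z :=
    fun z => (hδ.differentiable (by simp)) z
  have key : ∀ K : ℕ, ∀ z ∈ U, (L^[K] fun y => ρ y / δ y ^ p) z
      = ∑ j ∈ Finset.range (K+1), Acoef p K j * ((L^[K-j] ρ) z / δ z ^ (p+j)) := by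
    intro K
    induction K with
    | zero =>
      intro z hz
      simp [Acoef]
    | succ K ih =>
      intro z hz
      have hδz : δ z ≠ 0 := ne_of_gt (hδpos z hz)
      have hdiv : ∀ j : ℕ, DifferentiableAt ℝ (fun y => (L^[K-j] ρ) y / δ y ^ (p+j)) z :=
        by
        intro j
        have h1 : DifferentiableAt ℝ (L^[K-j] ρ) z :=
          (hsmiter (K-j)).differentiable (by simp) z
        have h2 : DifferentiableAt ℝ (fun y => δ y ^ (p+j)) z := (hδdiff z).pow (p+j)
        have h3 : DifferentiableAt ℝ (fun y => (δ y ^ (p+j))⁻¹) z :=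
          h2.inv (pow_ne_zero _ hδz)
        simpa only [div_eq_mul_inv] using h1.fun_mul h3
      have hdiffterm : ∀ j ∈ Finset.range (K+1), DifferentiableAt ℝ
          (fun y => Acoef p K j * ((L^[K-j] ρ) y / δ y ^ (p+j))) z :=
        fun j _ => (hdiv j).const_mul _
      rw [Function.iterate_succ_apply', L_local hL hU ih hz,
        L_sum hX hL (Finset.range (K+1)) _ hdiffterm]
      have hterm : ∀ j ∈ Finset.range (K+1),
          L (fun y => Acoef p K j * ((L^[K-j] ρ) y / δ y ^ (p+j))) z
          = Acoef p K j * ((L^[K+1-j] ρ) z / δ z ^ (p+j))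
            - ((p:ℝ)+j) * Acoef p K j * ((L^[K-j] ρ) z / δ z ^ (p+j+1)) := by
        intro j hj
        rw [L_smul hX hL _ (hdiv j),
          L_div hX hδ hL hδz (hXδ z hz) (hsmiter (K-j)) (p+j)]
        have hKj : L (L^[K-j] ρ) z = (L^[K+1-j] ρ) z := by
          rw [show K+1-j = (K-j)+1 by
            have : j ≤ K := by simpa using Nat.lt_succ_iff.mp (Finset.mem_range.mp hj)
            omega,
            Function.iterate_succ_apply']
        rw [hKj]
        push_cast
        ring
      rw [Finset.sum_congr rfl hterm, Finset.sum_sub_distrib]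
      -- reshuffle sums
      rw [Finset.sum_range_succ'
        (fun j => Acoef p (K+1) j * ((L^[K+1-j] ρ) z / δ z ^ (p+j))) (K+1)]
      rw [Finset.sum_range_succ'
        (fun j => Acoef p K j * ((L^[K+1-j] ρ) z / δ z ^ (p+j))) K]
      have eA : ∀ j : ℕ, Acoef p (K+1) (j+1) = Acoef p K (j+1) - ((p:ℝ)+j) * Acoef p K j :=
        fun j => rfl
      have eA0 : Acoef p (K+1) 0 = Acoef p K 0 := rfl
      simp only [eA, eA0, sub_mul, Finset.sum_sub_distrib]
      rw [Finset.sum_range_succ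
        (fun j => Acoef p K (j+1) * ((L^[K+1-(j+1)] ρ) z / δ z ^ (p+(j+1)))) K,
        Acoef_eq_zero p K (K+1) (by omega)]
      have e2 : ∑ j ∈ Finset.range (K+1),
          ((p:ℝ)+j) * Acoef p K j * ((L^[K+1-(j+1)] ρ) z / δ z ^ (p+(j+1)))
          = ∑ j ∈ Finset.range (K+1),
          ((p:ℝ)+j) * Acoef p K j * ((L^[K-j] ρ) z / δ z ^ (p+j+1)) := by
        refine Finset.sum_congr rfl fun j hj => ?_
        have h1 : K+1-(j+1) = K-j := Nat.succ_sub_succ K j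
        have h2 : p+(j+1) = p+j+1 := rfl
        rw [h1, h2]
      rw [e2]
      ring
  have hρx : ρ x ≠ 0 := ne_of_gt (hρpos x)
  have hδx : δ x ≠ 0 := ne_of_gt (hδpos x hx)
  have h1 := hc k x hx
  rw [key k x hx] at h1
  have h2 : ∑ j ∈ Finset.range (k+1), Acoef p k j * ((L^[k-j] ρ) x / δ x ^ (p+j))
      = (∑ j ∈ Finset.range (k+1), Acoef p k j * (d (k-j) x / δ x ^ j)) * (ρ x / δ x ^ p) := by
    rw [Finset.sum_mul]
    refine Finset.sum_congr rfl fun j hj => ?_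
    rw [hd (k-j) x hx, pow_add]
    field_simp
  rw [h2] at h1
  exact (mul_right_cancel₀ (div_ne_zero hρx (pow_ne_zero _ hδx)) h1).symm
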